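/- Let (U,s,h) be an SL-structure satisfying the septraction M₁ −⊛ M₂ of two minterms: there exists h' disjoint from h with (U,s,h') ⊨ M₁ and (U,s,h ⊎ h') ⊨ M₂. Suppose M₁ contains |h| ≥ min₁ and |h| < max₁, and M₂ contains |h| ≥ min₂ and |h| < max₂ (natural numbers or ∞). Then |dom(h)| ≥ min₂ − max₁ + 1 and |dom(h)| < max₂ − min₁. Moreover, every variable x allocated in h' (s(x) ∈ dom(h')) satisfies s(x) ∉ dom(h). -/

import Mathlib

/-- Domain of a heap: locations where the heap is defined. -/
def hdom {U : Type*} {k : ℕ} (h : U → Option (Fin k → U)) : Set U := {u | (h u).isSome}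

/-- Two heaps are disjoint iff their domains are disjoint. -/
def hdisj {U : Type*} {k : ℕ} (h₁ h₂ : U → Option (Fin k → U)) : Prop :=
  ∀ u, h₁ u = none ∨ h₂ u = none

/-- Union of (disjoint) heaps. -/
def hunion {U : Type*} {k : ℕ} (h₁ h₂ : U → Option (Fin k → U)) :
    U → Option (Fin k → U) :=
  fun u => (h₁ u).elim (h₂ u) some

/-- if `h'` disjoint from `h` witnesses the septraction
`M₁ −⊛ M₂`, with `min₁ ≤ |dom(h')| < max₁` and
`min₂ ≤ |dom(h ⊎ h')| < max₂` (bounds in `ℕ ∪ {∞}`), then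
`min₂ − max₁ + 1 ≤ |dom(h)|` (i.e. `min₂ + 1 ≤ |dom(h)| + max₁`),
`|dom(h)| < max₂ − min₁` (i.e. `|dom(h)| + min₁ < max₂`), and every variable
allocated in `h'` is not allocated in `h`. -/
theorem stmt14 {U Var : Type*} [Nonempty U] {k : ℕ} (hk : 1 ≤ k) (s : Var → U)
    (h h' : U → Option (Fin k → U))
    (hfin : (hdom h).Finite) (hfin' : (hdom h').Finite)
    (hd : hdisj h h')
    (min₁ max₁ min₂ max₂ : ℕ∞)
    (h1min : min₁ ≤ ((hdom h').ncard : ℕ∞))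
    (h1max : ((hdom h').ncard : ℕ∞) < max₁)
    (h2min : min₂ ≤ ((hdom (hunion h h')).ncard : ℕ∞))
    (h2max : ((hdom (hunion h h')).ncard : ℕ∞) < max₂) :
    (min₂ + 1 ≤ ((hdom h).ncard : ℕ∞) + max₁) ∧
    (((hdom h).ncard : ℕ∞) + min₁ < max₂) ∧
    (∀ x : Var, s x ∈ hdom h' → s x ∉ hdom h) := by
  have hdomu : hdom (hunion h h') = hdom h ∪ hdom h' := by
    ext u
    rcases hd u with h0 | h0 <;>
      simp [hdom, hunion, h0, Set.mem_union] <;> cases h u <;> simp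
  have hdisj2 : Disjoint (hdom h) (hdom h') := by
    rw [Set.disjoint_left]
    intro u hu hu'
    rcases hd u with h0 | h0 <;> simp [hdom, h0] at hu hu'
  have hcard : (hdom (hunion h h')).ncard = (hdom h).ncard + (hdom h').ncard := by
    rw [hdomu, Set.ncard_union_eq hdisj2 hfin hfin']
  rw [hcard] at h2min h2max
  push_cast at h2min h2max
  refine ⟨?_, ?_, ?_⟩
  · calc min₂ + 1 ≤ ((hdom h).ncard : ℕ∞) + (hdom h').ncard + 1 := by
          exact_mod_cast add_le_add_left h2min 1
      _ ≤ ((hdom h).ncard : ℕ∞) + max₁ := by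
          rw [add_assoc]
          exact add_le_add_right (Order.add_one_le_of_lt h1max) _
  · calc ((hdom h).ncard : ℕ∞) + min₁ ≤ ((hdom h).ncard : ℕ∞) + (hdom h').ncard :=
          add_le_add_right h1min _
      _ < max₂ := h2max
  · intro x hx' hx
    rcases hd (s x) with h0 | h0 <;> simp [hdom, h0] at hx hx'
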